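/- Let TL, TR, BL, BR be rotations by π in SO(3) (order-2 elements, identified with their axes, which are lines in R^3). Suppose: (i) TL ⊥ BL and TR ⊥ BR; (ii) the unique axis perpendicular to both TR and BR lies in the plane spanned by TL and BL and makes an angle of π/4 with each of them; (iii) symmetrically, the axis perpendicular to both TL and BL lies in the plane spanned by TR and BR at angle π/4 to each. Then any two quadruples (TL, TR, BL, BR) and (TL', TR', BL', BR') satisfying these conditions are conjugate by a single element of SO(3), i.e., the configuration is unique up to the simultaneous SO(3) action. -/

import Mathlib

open Matrix

/-- A configuration of four `π`-rotations `TL, TR, BL, BR` in `SO(3)` together with unit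
vectors spanning their axes, satisfying the conditions of the paper's partial example:
`TL ⊥ BL`, `TR ⊥ BR`; every unit vector orthogonal to the axes of `TR` and `BR` lies in the
plane spanned by the axes of `TL` and `BL`, at angle `π/4` to each of them; and
symmetrically. -/
structure PiRotationConfig (TL TR BL BR : Matrix (Fin 3) (Fin 3) ℝ)
    (tl tr bl br : Fin 3 → ℝ) : Prop where
  oTL : TL ∈ Matrix.orthogonalGroup (Fin 3) ℝ
  dTL : TL.det = 1
  rTL : TL * TL = 1 ∧ TL ≠ 1
  axTL : TL.mulVec tl = tl ∧ tl ⬝ᵥ tl = 1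
  oTR : TR ∈ Matrix.orthogonalGroup (Fin 3) ℝ
  dTR : TR.det = 1
  rTR : TR * TR = 1 ∧ TR ≠ 1
  axTR : TR.mulVec tr = tr ∧ tr ⬝ᵥ tr = 1
  oBL : BL ∈ Matrix.orthogonalGroup (Fin 3) ℝ
  dBL : BL.det = 1
  rBL : BL * BL = 1 ∧ BL ≠ 1
  axBL : BL.mulVec bl = bl ∧ bl ⬝ᵥ bl = 1
  oBR : BR ∈ Matrix.orthogonalGroup (Fin 3) ℝ
  dBR : BR.det = 1
  rBR : BR * BR = 1 ∧ BR ≠ 1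
  axBR : BR.mulVec br = br ∧ br ⬝ᵥ br = 1
  perpL : tl ⬝ᵥ bl = 0
  perpR : tr ⬝ᵥ br = 0
  condR : ∀ u : Fin 3 → ℝ, u ⬝ᵥ u = 1 → u ⬝ᵥ tr = 0 → u ⬝ᵥ br = 0 →
    u ∈ Submodule.span ℝ ({tl, bl} : Set (Fin 3 → ℝ)) ∧
      |u ⬝ᵥ tl| = Real.sqrt 2 / 2 ∧ |u ⬝ᵥ bl| = Real.sqrt 2 / 2
  condL : ∀ u : Fin 3 → ℝ, u ⬝ᵥ u = 1 → u ⬝ᵥ tl = 0 → u ⬝ᵥ bl = 0 →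
    u ∈ Submodule.span ℝ ({tr, br} : Set (Fin 3 → ℝ)) ∧
      |u ⬝ᵥ tr| = Real.sqrt 2 / 2 ∧ |u ⬝ᵥ br| = Real.sqrt 2 / 2

noncomputable def pirotSgn (x : ℝ) : ℝ := if 0 ≤ x then 1 else -1

lemma pirotSgn_mul_self (x : ℝ) : pirotSgn x * x = |x| := by
  unfold pirotSgn; split_ifs with h
  · rw [one_mul, abs_of_nonneg h]
  · rw [abs_of_neg (lt_of_not_ge h)]; ring

lemma pirotSgn_sq (x : ℝ) : pirotSgn x * pirotSgn x = 1 := by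
  unfold pirotSgn; split_ifs <;> norm_num

lemma pirotSgn_mul {x y : ℝ} (hx : x ≠ 0) (hy : y ≠ 0) :
    pirotSgn (x * y) = pirotSgn x * pirotSgn y := by
  unfold pirotSgn
  rcases lt_or_gt_of_ne hx with h|h <;> rcases lt_or_gt_of_ne hy with h'|h'
  · rw [if_pos (mul_pos_of_neg_of_neg h h').le, if_neg (not_le.mpr h), if_neg (not_le.mpr h')]; norm_num
  · rw [if_neg (not_le.mpr (mul_neg_of_neg_of_pos h h')), if_neg (not_le.mpr h), if_pos h'.le]; norm_num
  · rw [if_neg (not_le.mpr (mul_neg_of_pos_of_neg h h')), if_pos h.le, if_neg (not_le.mpr h')]; norm_num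
  · rw [if_pos (mul_pos h h').le, if_pos h.le, if_pos h'.le]; norm_num

lemma gram_eq_one {u1 u2 u3 : Fin 3 → ℝ}
    (h11 : u1 ⬝ᵥ u1 = 1) (h22 : u2 ⬝ᵥ u2 = 1) (h33 : u3 ⬝ᵥ u3 = 1)
    (h12 : u1 ⬝ᵥ u2 = 0) (h13 : u1 ⬝ᵥ u3 = 0) (h23 : u2 ⬝ᵥ u3 = 0) :
    (Matrix.of ![u1, u2, u3]) * (Matrix.of ![u1, u2, u3])ᵀ = 1 := by
  simp only [dotProduct, Fin.sum_univ_three] at h11 h22 h33 h12 h13 h23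
  ext i j
  fin_cases i <;> fin_cases j <;>
    simp only [Matrix.mul_apply, Matrix.transpose_apply, Matrix.of_apply, Fin.sum_univ_three,
      Matrix.one_apply, Matrix.cons_val_zero, Matrix.cons_val_one, Matrix.head_cons,
      Matrix.cons_val_two, Matrix.tail_cons] <;> norm_num [Fin.ext_iff] <;> linarith

lemma basis_complete {u1 u2 u3 : Fin 3 → ℝ}
    (h11 : u1 ⬝ᵥ u1 = 1) (h22 : u2 ⬝ᵥ u2 = 1) (h33 : u3 ⬝ᵥ u3 = 1)
    (h12 : u1 ⬝ᵥ u2 = 0) (h13 : u1 ⬝ᵥ u3 = 0) (h23 : u2 ⬝ᵥ u3 = 0)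
    (x : Fin 3 → ℝ) :
    x = (x ⬝ᵥ u1) • u1 + (x ⬝ᵥ u2) • u2 + (x ⬝ᵥ u3) • u3 := by
  have hMtM : (Matrix.of ![u1, u2, u3])ᵀ * (Matrix.of ![u1, u2, u3]) = 1 :=
    mul_eq_one_comm.mp (gram_eq_one h11 h22 h33 h12 h13 h23)
  have h : (Matrix.of ![u1, u2, u3])ᵀ *ᵥ ((Matrix.of ![u1, u2, u3]) *ᵥ x) = x := by
    rw [Matrix.mulVec_mulVec, hMtM, Matrix.one_mulVec]
  funext i
  have hi := congrFun h i
  simp [Matrix.mulVec, dotProduct, Fin.sum_univ_three, Matrix.transpose_apply] at hi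
  simp [dotProduct, Fin.sum_univ_three]
  fin_cases i <;> simp at hi ⊢ <;> linarith

lemma dot_mulVec_ortho {R : Matrix (Fin 3) (Fin 3) ℝ} (h : Rᵀ * R = 1) (x y : Fin 3 → ℝ) :
    (R *ᵥ x) ⬝ᵥ (R *ᵥ y) = x ⬝ᵥ y := by
  rw [Matrix.dotProduct_mulVec, ← Matrix.mulVec_transpose, Matrix.mulVec_mulVec, h,
    Matrix.one_mulVec]

lemma rot_eq_of_axis {R : Matrix (Fin 3) (Fin 3) ℝ}
    (ho : R ∈ Matrix.orthogonalGroup (Fin 3) ℝ) (hd : R.det = 1)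
    (h2 : R * R = 1) (hne : R ≠ 1) {v : Fin 3 → ℝ}
    (hv : R *ᵥ v = v) (hv1 : v ⬝ᵥ v = 1) :
    R = (2:ℝ) • vecMulVec v v - 1 := by
  have hstar : R * Rᵀ = 1 := by
    have h' := (Matrix.mem_orthogonalGroup_iff _ _).mp ho
    exact h'
  have htR : Rᵀ * R = 1 := mul_eq_one_comm.mp hstar
  have hpres := dot_mulVec_ortho htR
  have key : ∀ x : Fin 3 → ℝ, x ⬝ᵥ v = 0 → R *ᵥ x = -x := by
    intro x hx
    by_contra hne'
    have hz0 : x + R *ᵥ x ≠ 0 := by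
      intro h0
      exact hne' (by rw [eq_neg_iff_add_eq_zero, add_comm]; exact h0)
    set z := x + R *ᵥ x with hz
    have hRz : R *ᵥ z = z := by
      rw [hz, Matrix.mulVec_add, Matrix.mulVec_mulVec, h2, Matrix.one_mulVec, add_comm]
    have hRxv : (R *ᵥ x) ⬝ᵥ v = 0 := by
      have h' := hpres x v; rw [hv] at h'; rw [h']; exact hx
    have hzv : z ⬝ᵥ v = 0 := by rw [hz, add_dotProduct, hx, hRxv, add_zero]
    have hzznn : 0 ≤ z ⬝ᵥ z := by
      simp only [dotProduct, Fin.sum_univ_three]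
      nlinarith [mul_self_nonneg (z 0), mul_self_nonneg (z 1), mul_self_nonneg (z 2)]
    have hzz : 0 < z ⬝ᵥ z := by
      rcases lt_or_eq_of_le hzznn with h'|h'
      · exact h'
      · exact absurd (dotProduct_self_eq_zero.mp h'.symm) hz0
    set c := Real.sqrt (z ⬝ᵥ z) with hc
    have hcpos : 0 < c := Real.sqrt_pos.mpr hzz
    set w := c⁻¹ • z with hw
    have hww : w ⬝ᵥ w = 1 := by
      rw [hw, smul_dotProduct, dotProduct_smul, smul_eq_mul, smul_eq_mul, hc]
      rw [← mul_assoc]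
      rw [show (Real.sqrt (z ⬝ᵥ z))⁻¹ * (Real.sqrt (z ⬝ᵥ z))⁻¹ = (z ⬝ᵥ z)⁻¹ by
        rw [← mul_inv]; rw [Real.mul_self_sqrt hzznn]]
      exact inv_mul_cancel₀ (ne_of_gt hzz)
    have hwv : w ⬝ᵥ v = 0 := by
      rw [hw, smul_dotProduct, hzv, smul_zero]
    have hRw : R *ᵥ w = w := by rw [hw, Matrix.mulVec_smul, hRz]
    set u := crossProduct v w with hu
    have huv : v ⬝ᵥ u = 0 := dot_self_cross v w
    have huw : w ⬝ᵥ u = 0 := dot_cross_self v w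
    have hvw : v ⬝ᵥ w = 0 := by rw [dotProduct_comm]; exact hwv
    have huu : u ⬝ᵥ u = 1 := by
      rw [hu, cross_dot_cross, hv1, hww, hvw]; ring
    have hRuv : (R *ᵥ u) ⬝ᵥ v = 0 := by
      have h' := hpres u v; rw [hv] at h'; rw [h', dotProduct_comm]; exact huv
    have hRuw : (R *ᵥ u) ⬝ᵥ w = 0 := by
      have h' := hpres u w; rw [hRw] at h'; rw [h', dotProduct_comm]; exact huw
    have hRu := basis_complete hv1 hww huu hvw huv huw (R *ᵥ u)
    rw [hRuv, hRuw, zero_smul, zero_smul, zero_add, zero_add] at hRu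
    set d := (R *ᵥ u) ⬝ᵥ u with hdd
    -- matrix with rows v w u
    have hMMt := gram_eq_one hv1 hww huu hvw huv huw
    set M := Matrix.of ![v, w, u] with hM
    have hMtM : Mᵀ * M = 1 := mul_eq_one_comm.mp hMMt
    have hdet : M.det ≠ 0 := by
      intro h0
      have := congrArg Matrix.det hMMt
      rw [Matrix.det_mul, Matrix.det_transpose, h0, Matrix.det_one] at this
      norm_num at this
    have hRM : R * Mᵀ = Mᵀ * Matrix.diagonal ![1, 1, d] := by
      have hv' : ∀ i, R i 0 * v 0 + R i 1 * v 1 + R i 2 * v 2 = v i := by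
        intro i
        have := congrFun hv i
        simpa [Matrix.mulVec, dotProduct, Fin.sum_univ_three] using this
      have hw' : ∀ i, R i 0 * w 0 + R i 1 * w 1 + R i 2 * w 2 = w i := by
        intro i
        have := congrFun hRw i
        simpa [Matrix.mulVec, dotProduct, Fin.sum_univ_three] using this
      have hu' : ∀ i, R i 0 * u 0 + R i 1 * u 1 + R i 2 * u 2 = d * u i := by
        intro i
        have := congrFun hRu i
        simpa [Matrix.mulVec, dotProduct, Fin.sum_univ_three, hdd] using this
      ext i j
      fin_cases j <;>
        simp only [hM, Matrix.mul_apply, Matrix.transpose_apply, Matrix.of_apply,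
          Fin.sum_univ_three, Matrix.diagonal, Matrix.cons_val_zero, Matrix.cons_val_one,
          Matrix.head_cons, Matrix.cons_val_two, Matrix.tail_cons] <;>
        norm_num [Fin.ext_iff] <;>
        first
          | linarith [hv' i]
          | linarith [hw' i]
          | linarith [hu' i]
    have hDdet : (Matrix.diagonal ![1, 1, d] : Matrix (Fin 3) (Fin 3) ℝ).det = d := by
      rw [Matrix.det_diagonal]
      simp [Fin.prod_univ_three]
    have hd1 : d = 1 := by
      have hmul := congrArg Matrix.det hRM
      rw [Matrix.det_mul, Matrix.det_mul, hd, one_mul, hDdet, Matrix.det_transpose] at hmul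
      exact mul_left_cancel₀ hdet (by rw [mul_one]; exact hmul.symm)
    have hD1 : (Matrix.diagonal ![1, 1, d] : Matrix (Fin 3) (Fin 3) ℝ) = 1 := by
      rw [hd1]
      ext i j
      fin_cases i <;> fin_cases j <;> simp [Matrix.diagonal, Matrix.one_apply, Fin.ext_iff]
    rw [hD1, Matrix.mul_one] at hRM
    have : R = 1 := by
      calc R = R * (Mᵀ * M) := by rw [hMtM, Matrix.mul_one]
      _ = (R * Mᵀ) * M := by rw [Matrix.mul_assoc]
      _ = Mᵀ * M := by rw [hRM]
      _ = 1 := hMtM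
    exact hne this
  -- conclude
  ext i j
  have hperp : (Pi.single j 1 - (v j) • v) ⬝ᵥ v = 0 := by
    rw [sub_dotProduct, smul_dotProduct, hv1, single_dotProduct]
    simp
  have hx := key _ hperp
  rw [Matrix.mulVec_sub, Matrix.mulVec_smul, hv] at hx
  have hxi := congrFun hx i
  simp only [Pi.sub_apply, Pi.smul_apply, Pi.neg_apply, smul_eq_mul] at hxi
  rw [Matrix.mulVec_single_one, Matrix.col_apply] at hxi
  simp only [Matrix.sub_apply, Matrix.smul_apply, Matrix.vecMulVec_apply, Matrix.one_apply,
    smul_eq_mul]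
  rcases eq_or_ne i j with h|h
  · subst h
    simp only [Pi.single_eq_same] at hxi
    rw [if_pos rfl]
    linear_combination hxi
  · simp only [Pi.single_eq_of_ne h] at hxi
    rw [if_neg h]
    linear_combination hxi

noncomputable def rotPi (v : Fin 3 → ℝ) : Matrix (Fin 3) (Fin 3) ℝ :=
  (2:ℝ) • vecMulVec v v - 1

lemma rotPi_smul {c : ℝ} (hc : c * c = 1) (v : Fin 3 → ℝ) : rotPi (c • v) = rotPi v := by
  unfold rotPi
  congr 1
  ext i j
  simp only [Matrix.smul_apply, Matrix.vecMulVec_apply, Pi.smul_apply, smul_eq_mul]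
  linear_combination (2 * v i * v j) * hc

lemma rotPi_conj {P : Matrix (Fin 3) (Fin 3) ℝ} (hP : P * Pᵀ = 1) (v : Fin 3 → ℝ) :
    rotPi (P *ᵥ v) = P * rotPi v * Pᵀ := by
  unfold rotPi
  have h1 : vecMulVec (P *ᵥ v) (P *ᵥ v) = P * vecMulVec v v * Pᵀ := by
    rw [Matrix.vecMulVec_eq (Fin 1), Matrix.vecMulVec_eq (Fin 1), Matrix.replicateCol_mulVec,
      Matrix.replicateRow_mulVec, Matrix.transpose_mul, Matrix.transpose_replicateCol]
    rw [Matrix.mul_assoc, Matrix.mul_assoc, Matrix.mul_assoc]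
  rw [h1, Matrix.mul_sub, Matrix.sub_mul, Matrix.mul_one, hP, Matrix.mul_smul, Matrix.smul_mul]

lemma abs_of_mul_self {x c : ℝ} (hc : 0 ≤ c) (h : x * x = c * c) : |x| = c := by
  rcases mul_self_eq_mul_self_iff.mp h with h'|h'
  · rw [h', abs_of_nonneg hc]
  · rw [h', abs_neg, abs_of_nonneg hc]

lemma normal_form {TL TR BL BR : Matrix (Fin 3) (Fin 3) ℝ} {tl tr bl br : Fin 3 → ℝ}
    (hc : PiRotationConfig TL TR BL BR tl tr bl br) :
    ∃ v1 v2 v3 v4 : Fin 3 → ℝ,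
      v1 ⬝ᵥ v1 = 1 ∧ v2 ⬝ᵥ v2 = 1 ∧ v1 ⬝ᵥ v2 = 0 ∧
      v3 = (1/2 : ℝ) • v1 + (1/2 : ℝ) • v2 + (Real.sqrt 2/2) • (crossProduct v1 v2) ∧
      v4 = (-(1/2) : ℝ) • v1 + (-(1/2) : ℝ) • v2 + (Real.sqrt 2/2) • (crossProduct v1 v2) ∧
      TL = rotPi v1 ∧ BL = rotPi v2 ∧ TR = rotPi v3 ∧ BR = rotPi v4 := by
  obtain ⟨hTL, htl1⟩ := hc.axTL
  obtain ⟨hTR, htr1⟩ := hc.axTR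
  obtain ⟨hBL, hbl1⟩ := hc.axBL
  obtain ⟨hBR, hbr1⟩ := hc.axBR
  have hlb : bl ⬝ᵥ tl = 0 := by rw [dotProduct_comm]; exact hc.perpL
  have hrb : br ⬝ᵥ tr = 0 := by rw [dotProduct_comm]; exact hc.perpR
  set e3 := crossProduct tl bl with he3
  have htle3 : tl ⬝ᵥ e3 = 0 := dot_self_cross tl bl
  have hble3 : bl ⬝ᵥ e3 = 0 := dot_cross_self tl bl
  have he3tl : e3 ⬝ᵥ tl = 0 := by rw [dotProduct_comm]; exact htle3
  have he3bl : e3 ⬝ᵥ bl = 0 := by rw [dotProduct_comm]; exact hble3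
  have he31 : e3 ⬝ᵥ e3 = 1 := by
    rw [he3, cross_dot_cross, htl1, hbl1, hc.perpL]; ring
  obtain ⟨hspanL, htrA, hbrA⟩ := hc.condL e3 he31 he3tl he3bl
  have hdec := basis_complete htl1 hbl1 he31 hc.perpL htle3 hble3
  have htr_dec := hdec tr
  have hbr_dec := hdec br
  set a := tr ⬝ᵥ tl with ha
  set b := tr ⬝ᵥ bl with hb
  set p := tr ⬝ᵥ e3 with hp
  set a' := br ⬝ᵥ tl with ha'
  set b' := br ⬝ᵥ bl with hb'
  set p' := br ⬝ᵥ e3 with hp'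
  have hpabs : |p| = Real.sqrt 2 / 2 := by rw [hp, dotProduct_comm]; exact htrA
  have hp'abs : |p'| = Real.sqrt 2 / 2 := by rw [hp', dotProduct_comm]; exact hbrA
  have hs2 : Real.sqrt 2 / 2 * (Real.sqrt 2 / 2) = 1/2 := by
    rw [div_mul_div_comm, Real.mul_self_sqrt (by norm_num : (0:ℝ) ≤ 2)]; norm_num
  have hpp : p * p = 1/2 := by rw [← abs_mul_abs_self p, hpabs]; exact hs2
  have hp'p' : p' * p' = 1/2 := by rw [← abs_mul_abs_self p', hp'abs]; exact hs2
  have htr_norm : a*a + b*b + p*p = 1 := by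
    have h := congrArg (fun x => tr ⬝ᵥ x) htr_dec
    simp only [dotProduct_add, dotProduct_smul, smul_eq_mul] at h
    rw [htr1, ← ha, ← hb, ← hp] at h
    linarith
  have hbr_norm : a'*a' + b'*b' + p'*p' = 1 := by
    have h := congrArg (fun x => br ⬝ᵥ x) hbr_dec
    simp only [dotProduct_add, dotProduct_smul, smul_eq_mul] at h
    rw [hbr1, ← ha', ← hb', ← hp'] at h
    linarith
  set n := crossProduct tr br with hn
  have hntr : n ⬝ᵥ tr = 0 := by rw [dotProduct_comm]; exact dot_self_cross tr br
  have hnbr : n ⬝ᵥ br = 0 := by rw [dotProduct_comm]; exact dot_cross_self tr br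
  have hnn : n ⬝ᵥ n = 1 := by rw [hn, cross_dot_cross, htr1, hbr1, hc.perpR]; ring
  obtain ⟨hspanR, hnsA, hntA⟩ := hc.condR n hnn hntr hnbr
  set s := n ⬝ᵥ tl with hs
  set t := n ⬝ᵥ bl with ht
  have hss : s * s = 1/2 := by rw [← abs_mul_abs_self s, hnsA]; exact hs2
  have htt : t * t = 1/2 := by rw [← abs_mul_abs_self t, hntA]; exact hs2
  have hne3 : n ⬝ᵥ e3 = 0 := by
    obtain ⟨α, β, hαβ⟩ := Submodule.mem_span_pair.mp hspanR
    rw [← hαβ, add_dotProduct, smul_dotProduct, smul_dotProduct, htle3,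
      hble3]
    simp
  have hrel1 : a * s + b * t = 0 := by
    have h := congrArg (fun x => n ⬝ᵥ x) htr_dec
    simp only [dotProduct_add, dotProduct_smul, smul_eq_mul] at h
    rw [hntr, ← hs, ← ht, hne3] at h
    linarith
  have hrel1' : a' * s + b' * t = 0 := by
    have h := congrArg (fun x => n ⬝ᵥ x) hbr_dec
    simp only [dotProduct_add, dotProduct_smul, smul_eq_mul] at h
    rw [hnbr, ← hs, ← ht, hne3] at h
    linarith
  have hab : a * a = b * b := by
    have h2 : (a*s)*(a*s) = (b*t)*(b*t) := by linear_combination (a*s - b*t) * hrel1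
    linear_combination 2*h2 + (-2*a*a)*hss + (2*b*b)*htt
  have hab' : a' * a' = b' * b' := by
    have h2 : (a'*s)*(a'*s) = (b'*t)*(b'*t) := by linear_combination (a'*s - b'*t) * hrel1'
    linear_combination 2*h2 + (-2*a'*a')*hss + (2*b'*b')*htt
  have haa : a * a = 1/4 := by linarith
  have hbb : b * b = 1/4 := by linarith
  have ha'a' : a' * a' = 1/4 := by linarith
  have hb'b' : b' * b' = 1/4 := by linarith
  -- relations from e3 ∈ span {tr, br}
  obtain ⟨α, β, hαβ⟩ := Submodule.mem_span_pair.mp hspanL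
  have hα : α = p := by
    have h := congrArg (fun x => x ⬝ᵥ tr) hαβ
    simp only [add_dotProduct, smul_dotProduct, smul_eq_mul] at h
    rw [htr1, hrb, dotProduct_comm e3 tr, ← hp] at h
    linarith
  have hβ : β = p' := by
    have h := congrArg (fun x => x ⬝ᵥ br) hαβ
    simp only [add_dotProduct, smul_dotProduct, smul_eq_mul] at h
    rw [hbr1, hc.perpR, dotProduct_comm e3 br, ← hp'] at h
    linarith
  have hrelA : p * a + p' * a' = 0 := by
    have h := congrArg (fun x => x ⬝ᵥ tl) hαβ
    simp only [add_dotProduct, smul_dotProduct, smul_eq_mul] at h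
    rw [he3tl, ← ha, ← ha', hα, hβ] at h
    linarith
  have hrelB : p * b + p' * b' = 0 := by
    have h := congrArg (fun x => x ⬝ᵥ bl) hαβ
    simp only [add_dotProduct, smul_dotProduct, smul_eq_mul] at h
    rw [he3bl, ← hb, ← hb', hα, hβ] at h
    linarith
  -- signs
  set q := pirotSgn p with hqdef
  set r := pirotSgn a with hrdef
  set u := pirotSgn b with hudef
  set sg := pirotSgn p' with hsgdef
  have hq2 : q * q = 1 := pirotSgn_sq p
  have hr2 : r * r = 1 := pirotSgn_sq a
  have hu2 : u * u = 1 := pirotSgn_sq b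
  have hsg2 : sg * sg = 1 := pirotSgn_sq p'
  have hqp : q * p = Real.sqrt 2/2 := by rw [hqdef, pirotSgn_mul_self, hpabs]
  have hsp' : sg * p' = Real.sqrt 2/2 := by rw [hsgdef, pirotSgn_mul_self, hp'abs]
  have hra : r * a = 1/2 := by
    rw [hrdef, pirotSgn_mul_self]
    exact abs_of_mul_self (by norm_num) (by rw [haa]; norm_num)
  have hub : u * b = 1/2 := by
    rw [hudef, pirotSgn_mul_self]
    exact abs_of_mul_self (by norm_num) (by rw [hbb]; norm_num)
  have hp'ne : (2*p') ≠ 0 := by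
    intro h
    have : p' = 0 := by linarith
    rw [this] at hp'p'; norm_num at hp'p'
  set ε1 := q * u with hε1
  set ε2 := q * r with hε2
  set ε3 := q * r * u with hε3
  set ε4 := sg * r * u with hε4
  have he12 : ε1 * ε1 = 1 := by rw [hε1]; linear_combination (u*u)*hq2 + hu2
  have he22 : ε2 * ε2 = 1 := by rw [hε2]; linear_combination (r*r)*hq2 + hr2
  have he32 : ε3 * ε3 = 1 := by rw [hε3]; linear_combination (r*r*u*u)*hq2 + (u*u)*hr2 + hu2
  have he42 : ε4 * ε4 = 1 := by rw [hε4]; linear_combination (r*r*u*u)*hsg2 + (u*u)*hr2 + hu2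
  have G1 : ε3 * ε1 * a = 1/2 := by
    rw [hε3, hε1]; linear_combination (r*a*u*u)*hq2 + (r*a)*hu2 + hra
  have G2 : ε3 * ε2 * b = 1/2 := by
    rw [hε3, hε2]; linear_combination (u*b*r*r)*hq2 + (u*b)*hr2 + hub
  have G3 : ε3 * (ε1 * ε2) * p = Real.sqrt 2/2 := by
    rw [hε3, hε1, hε2]
    linear_combination (q*p*r*r*u*u)*hq2 + (q*p*u*u)*hr2 + (q*p)*hu2 + hqp
  have G4 : ε4 * ε1 * a' = -(1/2) := by
    refine mul_left_cancel₀ hp'ne ?_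
    rw [hε4, hε1]
    linear_combination (2*sg*r*q*u*u)*hrelA + (-2*sg*r*u*u*a)*hqp +
      (-2*sg*u*u*(Real.sqrt 2/2))*hra + (-(sg*(Real.sqrt 2/2)))*hu2 + sg*hsp' + (-p')*hsg2
  have G5 : ε4 * ε2 * b' = -(1/2) := by
    refine mul_left_cancel₀ hp'ne ?_
    rw [hε4, hε2]
    linear_combination (2*sg*q*u*r*r)*hrelB + (-2*sg*u*r*r*b)*hqp +
      (-2*sg*r*r*(Real.sqrt 2/2))*hub + (-(sg*(Real.sqrt 2/2)))*hr2 + sg*hsp' + (-p')*hsg2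
  have G6 : ε4 * (ε1 * ε2) * p' = Real.sqrt 2/2 := by
    rw [hε4, hε1, hε2]
    linear_combination (sg*p'*r*r*u*u)*hq2 + (sg*p'*u*u)*hr2 + (sg*p')*hu2 + hsp'
  -- the normalized vectors
  refine ⟨ε1 • tl, ε2 • bl, ε3 • tr, ε4 • br, ?_, ?_, ?_, ?_, ?_, ?_, ?_, ?_, ?_⟩
  · rw [smul_dotProduct, dotProduct_smul, htl1, smul_eq_mul, smul_eq_mul, mul_one]
    exact he12
  · rw [smul_dotProduct, dotProduct_smul, hbl1, smul_eq_mul, smul_eq_mul, mul_one]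
    exact he22
  · rw [smul_dotProduct, dotProduct_smul, hc.perpL, smul_eq_mul, smul_eq_mul,
      mul_zero, mul_zero]
  · -- v3 decomposition
    have hw3 : crossProduct (ε1 • tl) (ε2 • bl) = (ε1*ε2) • e3 := by
      simp only [LinearMap.map_smul, LinearMap.smul_apply, smul_smul, ← he3, mul_comm ε2 ε1]
    have hv11 : (ε1 • tl) ⬝ᵥ (ε1 • tl) = 1 := by
      rw [smul_dotProduct, dotProduct_smul, htl1, smul_eq_mul, smul_eq_mul, mul_one]
      exact he12
    have hv22 : (ε2 • bl) ⬝ᵥ (ε2 • bl) = 1 := by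
      rw [smul_dotProduct, dotProduct_smul, hbl1, smul_eq_mul, smul_eq_mul, mul_one]
      exact he22
    have hv12 : (ε1 • tl) ⬝ᵥ (ε2 • bl) = 0 := by
      rw [smul_dotProduct, dotProduct_smul, hc.perpL, smul_eq_mul, smul_eq_mul,
        mul_zero, mul_zero]
    have hw33 : ((ε1*ε2) • e3) ⬝ᵥ ((ε1*ε2) • e3) = 1 := by
      rw [smul_dotProduct, dotProduct_smul, he31, smul_eq_mul, smul_eq_mul, mul_one]
      linear_combination (ε2*ε2)*he12 + he22
    have hv1w3 : (ε1 • tl) ⬝ᵥ ((ε1*ε2) • e3) = 0 := by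
      rw [smul_dotProduct, dotProduct_smul, htle3, smul_eq_mul, smul_eq_mul,
        mul_zero, mul_zero]
    have hv2w3 : (ε2 • bl) ⬝ᵥ ((ε1*ε2) • e3) = 0 := by
      rw [smul_dotProduct, dotProduct_smul, hble3, smul_eq_mul, smul_eq_mul,
        mul_zero, mul_zero]
    have hd3 := basis_complete hv11 hv22 hw33 hv12 hv1w3 hv2w3 (ε3 • tr)
    have c1 : (ε3 • tr) ⬝ᵥ (ε1 • tl) = 1/2 := by
      rw [smul_dotProduct, dotProduct_smul, ← ha, smul_eq_mul, smul_eq_mul]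
      linear_combination G1
    have c2 : (ε3 • tr) ⬝ᵥ (ε2 • bl) = 1/2 := by
      rw [smul_dotProduct, dotProduct_smul, ← hb, smul_eq_mul, smul_eq_mul]
      linear_combination G2
    have c3 : (ε3 • tr) ⬝ᵥ ((ε1*ε2) • e3) = Real.sqrt 2/2 := by
      rw [smul_dotProduct, dotProduct_smul, ← hp, smul_eq_mul, smul_eq_mul]
      linear_combination G3
    rw [c1, c2, c3] at hd3
    rw [hw3]
    exact hd3
  · -- v4 decomposition
    have hw3 : crossProduct (ε1 • tl) (ε2 • bl) = (ε1*ε2) • e3 := by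
      simp only [LinearMap.map_smul, LinearMap.smul_apply, smul_smul, ← he3, mul_comm ε2 ε1]
    have hv11 : (ε1 • tl) ⬝ᵥ (ε1 • tl) = 1 := by
      rw [smul_dotProduct, dotProduct_smul, htl1, smul_eq_mul, smul_eq_mul, mul_one]
      exact he12
    have hv22 : (ε2 • bl) ⬝ᵥ (ε2 • bl) = 1 := by
      rw [smul_dotProduct, dotProduct_smul, hbl1, smul_eq_mul, smul_eq_mul, mul_one]
      exact he22
    have hv12 : (ε1 • tl) ⬝ᵥ (ε2 • bl) = 0 := by
      rw [smul_dotProduct, dotProduct_smul, hc.perpL, smul_eq_mul, smul_eq_mul,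
        mul_zero, mul_zero]
    have hw33 : ((ε1*ε2) • e3) ⬝ᵥ ((ε1*ε2) • e3) = 1 := by
      rw [smul_dotProduct, dotProduct_smul, he31, smul_eq_mul, smul_eq_mul, mul_one]
      linear_combination (ε2*ε2)*he12 + he22
    have hv1w3 : (ε1 • tl) ⬝ᵥ ((ε1*ε2) • e3) = 0 := by
      rw [smul_dotProduct, dotProduct_smul, htle3, smul_eq_mul, smul_eq_mul,
        mul_zero, mul_zero]
    have hv2w3 : (ε2 • bl) ⬝ᵥ ((ε1*ε2) • e3) = 0 := by
      rw [smul_dotProduct, dotProduct_smul, hble3, smul_eq_mul, smul_eq_mul,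
        mul_zero, mul_zero]
    have hd4 := basis_complete hv11 hv22 hw33 hv12 hv1w3 hv2w3 (ε4 • br)
    have c1 : (ε4 • br) ⬝ᵥ (ε1 • tl) = -(1/2) := by
      rw [smul_dotProduct, dotProduct_smul, ← ha', smul_eq_mul, smul_eq_mul]
      linear_combination G4
    have c2 : (ε4 • br) ⬝ᵥ (ε2 • bl) = -(1/2) := by
      rw [smul_dotProduct, dotProduct_smul, ← hb', smul_eq_mul, smul_eq_mul]
      linear_combination G5
    have c3 : (ε4 • br) ⬝ᵥ ((ε1*ε2) • e3) = Real.sqrt 2/2 := by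
      rw [smul_dotProduct, dotProduct_smul, ← hp', smul_eq_mul, smul_eq_mul]
      linear_combination G6
    rw [c1, c2, c3] at hd4
    rw [hw3]
    exact hd4
  · rw [rotPi_smul he12]
    exact rot_eq_of_axis hc.oTL hc.dTL hc.rTL.1 hc.rTL.2 hTL htl1
  · rw [rotPi_smul he22]
    exact rot_eq_of_axis hc.oBL hc.dBL hc.rBL.1 hc.rBL.2 hBL hbl1
  · rw [rotPi_smul he32]
    exact rot_eq_of_axis hc.oTR hc.dTR hc.rTR.1 hc.rTR.2 hTR htr1
  · rw [rotPi_smul he42]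
    exact rot_eq_of_axis hc.oBR hc.dBR hc.rBR.1 hc.rBR.2 hBR hbr1


/-- Any two quadruples of `π`-rotations satisfying the configuration conditions are
simultaneously conjugate by a single element of `SO(3)`: the configuration is unique up to
the diagonal `SO(3)` action. -/
theorem pi_rotation_config_unique (TL TR BL BR TL' TR' BL' BR' : Matrix (Fin 3) (Fin 3) ℝ)
    (tl tr bl br tl' tr' bl' br' : Fin 3 → ℝ)
    (hc : PiRotationConfig TL TR BL BR tl tr bl br)
    (hc' : PiRotationConfig TL' TR' BL' BR' tl' tr' bl' br') :
    ∃ P : Matrix (Fin 3) (Fin 3) ℝ, P ∈ Matrix.orthogonalGroup (Fin 3) ℝ ∧ P.det = 1 ∧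
      TL' = P * TL * P⁻¹ ∧ TR' = P * TR * P⁻¹ ∧ BL' = P * BL * P⁻¹ ∧ BR' = P * BR * P⁻¹ := by
  obtain ⟨v1, v2, v3, v4, h11, h22, h12, hv3, hv4, hTL, hBL, hTR, hBR⟩ := normal_form hc
  obtain ⟨w1, w2, w3, w4, g11, g22, g12, hw3, hw4, hTL', hBL', hTR', hBR'⟩ := normal_form hc'
  set e := crossProduct v1 v2 with he
  set f := crossProduct w1 w2 with hf
  have hv1e : v1 ⬝ᵥ e = 0 := dot_self_cross v1 v2
  have hv2e : v2 ⬝ᵥ e = 0 := dot_cross_self v1 v2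
  have hee : e ⬝ᵥ e = 1 := by rw [he, cross_dot_cross, h11, h22, h12]; ring
  have hw1f : w1 ⬝ᵥ f = 0 := dot_self_cross w1 w2
  have hw2f : w2 ⬝ᵥ f = 0 := dot_cross_self w1 w2
  have hff : f ⬝ᵥ f = 1 := by rw [hf, cross_dot_cross, g11, g22, g12]; ring
  have h21 : v2 ⬝ᵥ v1 = 0 := by rw [dotProduct_comm]; exact h12
  have hev1 : e ⬝ᵥ v1 = 0 := by rw [dotProduct_comm]; exact hv1e
  have hev2 : e ⬝ᵥ v2 = 0 := by rw [dotProduct_comm]; exact hv2e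
  set M := Matrix.of ![v1, v2, e] with hM
  set N := Matrix.of ![w1, w2, f] with hN
  have hMMt : M * Mᵀ = 1 := gram_eq_one h11 h22 hee h12 hv1e hv2e
  have hNNt : N * Nᵀ = 1 := gram_eq_one g11 g22 hff g12 hw1f hw2f
  have hMtM : Mᵀ * M = 1 := mul_eq_one_comm.mp hMMt
  have hNtN : Nᵀ * N = 1 := mul_eq_one_comm.mp hNNt
  set P := Nᵀ * M with hP
  have hPPt : P * Pᵀ = 1 := by
    rw [hP, Matrix.transpose_mul, Matrix.transpose_transpose, Matrix.mul_assoc,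
      ← Matrix.mul_assoc M, hMMt, Matrix.one_mul, hNtN]
  have hPmem : P ∈ Matrix.orthogonalGroup (Fin 3) ℝ := by
    rw [Matrix.mem_orthogonalGroup_iff]
    exact hPPt
  have hdetM : M.det = 1 := by
    have h1 : v1 ⬝ᵥ (crossProduct v2) e = 1 := by
      rw [triple_product_permutation, triple_product_permutation, ← he, hee]
    rw [triple_product_eq_det] at h1
    exact h1
  have hdetN : N.det = 1 := by
    have h1 : w1 ⬝ᵥ (crossProduct w2) f = 1 := by
      rw [triple_product_permutation, triple_product_permutation, ← hf, hff]
    rw [triple_product_eq_det] at h1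
    exact h1
  have hdetP : P.det = 1 := by
    rw [hP, Matrix.det_mul, Matrix.det_transpose, hdetM, hdetN, mul_one]
  have hMv1 : M *ᵥ v1 = ![1, 0, 0] := by
    funext j
    have e11 := h11; have e21 := h21; have ee1 := hev1
    simp only [dotProduct, Fin.sum_univ_three] at e11 e21 ee1
    fin_cases j <;>
      simp [hM, Matrix.mulVec, dotProduct, Fin.sum_univ_three] <;> linarith
  have hMv2 : M *ᵥ v2 = ![0, 1, 0] := by
    funext j
    have e12 := h12; have e22 := h22; have ee2 := hev2
    simp only [dotProduct, Fin.sum_univ_three] at e12 e22 ee2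
    fin_cases j <;>
      simp [hM, Matrix.mulVec, dotProduct, Fin.sum_univ_three] <;> linarith
  have hMe : M *ᵥ e = ![0, 0, 1] := by
    funext j
    have e1e := hv1e; have e2e := hv2e; have eee := hee
    simp only [dotProduct, Fin.sum_univ_three] at e1e e2e eee
    fin_cases j <;>
      simp [hM, Matrix.mulVec, dotProduct, Fin.sum_univ_three] <;> linarith
  have hNt1 : Nᵀ *ᵥ ![1, 0, 0] = w1 := by
    funext i
    simp [hN, Matrix.mulVec, dotProduct, Fin.sum_univ_three, Matrix.transpose_apply]
  have hNt2 : Nᵀ *ᵥ ![0, 1, 0] = w2 := by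
    funext i
    simp [hN, Matrix.mulVec, dotProduct, Fin.sum_univ_three, Matrix.transpose_apply]
  have hNt3 : Nᵀ *ᵥ ![0, 0, 1] = f := by
    funext i
    simp [hN, Matrix.mulVec, dotProduct, Fin.sum_univ_three, Matrix.transpose_apply]
  have hPv1 : P *ᵥ v1 = w1 := by rw [hP, ← Matrix.mulVec_mulVec, hMv1, hNt1]
  have hPv2 : P *ᵥ v2 = w2 := by rw [hP, ← Matrix.mulVec_mulVec, hMv2, hNt2]
  have hPe : P *ᵥ e = f := by rw [hP, ← Matrix.mulVec_mulVec, hMe, hNt3]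
  have hPv3 : P *ᵥ v3 = w3 := by
    rw [hv3, hw3, Matrix.mulVec_add, Matrix.mulVec_add, Matrix.mulVec_smul, Matrix.mulVec_smul,
      Matrix.mulVec_smul, hPv1, hPv2, hPe]
  have hPv4 : P *ᵥ v4 = w4 := by
    rw [hv4, hw4, Matrix.mulVec_add, Matrix.mulVec_add, Matrix.mulVec_smul, Matrix.mulVec_smul,
      Matrix.mulVec_smul, hPv1, hPv2, hPe]
  have hPt : P⁻¹ = Pᵀ := Matrix.inv_eq_right_inv hPPt
  refine ⟨P, hPmem, hdetP, ?_, ?_, ?_, ?_⟩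
  · rw [hTL', hTL, hPt, ← hPv1, rotPi_conj hPPt]
  · rw [hTR', hTR, hPt, ← hPv3, rotPi_conj hPPt]
  · rw [hBL', hBL, hPt, ← hPv2, rotPi_conj hPPt]
  · rw [hBR', hBR, hPt, ← hPv4, rotPi_conj hPPt]
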